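/- Let z₁, …, z_m be unit vectors in ℂⁿ with m ≥ 2, and let c_max = max_{i ≠ j} |⟨z_i, z_j⟩|. Then for every positive integer k, (c_max)^{2k} ≥ (1/(m−1)) · (m / C(n+k−1, k) − 1), where C(n+k−1, k) is the binomial coefficient. -/

import Mathlib

open scoped ComplexInnerProductSpace
open Finset

private lemma welch_card (n k : ℕ) :
    (Finset.piAntidiag (univ : Finset (Fin n)) k).card = (n + k - 1).choose k := by
  classical
  rw [← Finset.map_sym_eq_piAntidiag, Finset.card_map, Finset.sym_univ]
  simp [Finset.card_univ, Sym.card_sym_eq_choose]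

private lemma welch_swap {I : Type*} [Fintype I] {J : Type*} [DecidableEq J] (s : Finset J)
    (w : I → J → ℂ) :
    ∑ a ∈ s, ∑ b ∈ s, Complex.normSq (∑ i, (starRingEnd ℂ) (w i a) * w i b)
      = ∑ i, ∑ j, Complex.normSq (∑ a ∈ s, (starRingEnd ℂ) (w i a) * w j a) := by
  have key : ∑ a ∈ s, ∑ b ∈ s, ((∑ i, (starRingEnd ℂ) (w i a) * w i b) *
        (starRingEnd ℂ) (∑ i, (starRingEnd ℂ) (w i a) * w i b))
      = ∑ i, ∑ j : I, ((∑ a ∈ s, (starRingEnd ℂ) (w i a) * w j a) *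
        (starRingEnd ℂ) (∑ a ∈ s, (starRingEnd ℂ) (w i a) * w j a)) := by
    simp only [map_sum, map_mul, Complex.conj_conj, Finset.sum_mul_sum]
    calc ∑ a ∈ s, ∑ b ∈ s, ∑ i, ∑ j,
          (starRingEnd ℂ) (w i a) * w i b * (w j a * (starRingEnd ℂ) (w j b))
        = ∑ a ∈ s, ∑ i, ∑ b ∈ s, ∑ j,
          (starRingEnd ℂ) (w i a) * w i b * (w j a * (starRingEnd ℂ) (w j b)) := by
          exact Finset.sum_congr rfl fun a _ => Finset.sum_comm
      _ = ∑ i, ∑ a ∈ s, ∑ b ∈ s, ∑ j,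
          (starRingEnd ℂ) (w i a) * w i b * (w j a * (starRingEnd ℂ) (w j b)) :=
          Finset.sum_comm
      _ = ∑ i, ∑ a ∈ s, ∑ j, ∑ b ∈ s,
          (starRingEnd ℂ) (w i a) * w i b * (w j a * (starRingEnd ℂ) (w j b)) := by
          exact Finset.sum_congr rfl fun i _ => Finset.sum_congr rfl fun a _ => Finset.sum_comm
      _ = ∑ i, ∑ j, ∑ a ∈ s, ∑ b ∈ s,
          (starRingEnd ℂ) (w i a) * w i b * (w j a * (starRingEnd ℂ) (w j b)) := by
          exact Finset.sum_congr rfl fun i _ => Finset.sum_comm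
      _ = ∑ i, ∑ j, ∑ a ∈ s, ∑ b ∈ s,
          (starRingEnd ℂ) (w i a) * w j a * (w i b * (starRingEnd ℂ) (w j b)) := by
          refine Finset.sum_congr rfl fun i _ => Finset.sum_congr rfl fun j _ =>
            Finset.sum_congr rfl fun a _ => Finset.sum_congr rfl fun b _ => by ring
  simp only [Complex.mul_conj] at key
  exact_mod_cast key

private lemma welch_inner (n k : ℕ) (x y : EuclideanSpace ℂ (Fin n)) :
    ∑ α ∈ Finset.piAntidiag (univ : Finset (Fin n)) k,
      (starRingEnd ℂ) (((Nat.multinomial univ α : ℝ).sqrt : ℂ) * ∏ t, x t ^ α t) *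
        ((((Nat.multinomial univ α : ℝ).sqrt : ℂ)) * ∏ t, y t ^ α t)
      = (⟪x, y⟫ : ℂ) ^ k := by
  classical
  rw [PiLp.inner_apply]
  simp only [RCLike.inner_apply]
  rw [Finset.sum_pow_eq_sum_piAntidiag]
  refine Finset.sum_congr rfl fun α hα => ?_
  rw [map_mul, map_prod]
  simp only [map_pow, Complex.conj_ofReal]
  rw [mul_mul_mul_comm, ← Complex.ofReal_mul,
    Real.mul_self_sqrt (Nat.cast_nonneg _), ← Finset.prod_mul_distrib]
  simp only [← mul_pow]
  norm_cast
  congr 1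
  exact Finset.prod_congr rfl fun i _ => by rw [mul_comm]

/-- The Welch bounds: for unit vectors `z₁, …, z_m` in `ℂⁿ` with maximal
cross-correlation `c_max`, one has `c_max^{2k} ≥ (m / C(n+k-1,k) - 1)/(m-1)`. -/
theorem welch_bound (n m : ℕ) (hm : 2 ≤ m)
    (z : Fin m → EuclideanSpace ℂ (Fin n)) (hz : ∀ i, ‖z i‖ = 1)
    (cmax : ℝ)
    (hcmax : IsGreatest {r : ℝ | ∃ i j : Fin m, i ≠ j ∧ r = ‖⟪z i, z j⟫‖} cmax)
    (k : ℕ) (hk : 0 < k) :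
    cmax ^ (2 * k)
      ≥ (1 / ((m : ℝ) - 1)) * ((m : ℝ) / (Nat.choose (n + k - 1) k : ℝ) - 1) := by
  classical
  rcases Nat.eq_zero_or_pos n with hn | hn
  · subst hn
    have h0 := hz ⟨0, by omega⟩
    rw [Subsingleton.elim (z ⟨0, by omega⟩) 0, norm_zero] at h0
    norm_num at h0
  set A := Finset.piAntidiag (univ : Finset (Fin n)) k with hA
  set w : Fin m → (Fin n → ℕ) → ℂ :=
    fun i α => ((Nat.multinomial univ α : ℝ).sqrt : ℂ) * ∏ t, z i t ^ α t with hw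
  have hG : ∀ i j, ∑ α ∈ A, (starRingEnd ℂ) (w i α) * w j α = (⟪z i, z j⟫ : ℂ) ^ k := by
    intro i j
    simp only [hw, hA]
    exact welch_inner n k (z i) (z j)
  have hGd : ∀ i, ∑ α ∈ A, (starRingEnd ℂ) (w i α) * w i α = 1 := by
    intro i
    rw [hG i i, inner_self_eq_norm_sq_to_K, hz i]
    norm_num
  have hd : ∀ i, ∑ α ∈ A, Complex.normSq (w i α) = 1 := by
    intro i
    have h : ((∑ α ∈ A, Complex.normSq (w i α) : ℝ) : ℂ) = 1 := by
      push_cast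
      rw [← hGd i]
      exact Finset.sum_congr rfl fun α _ => by
        rw [Complex.normSq_eq_conj_mul_self]
    exact_mod_cast h
  set d : (Fin n → ℕ) → ℝ := fun α => ∑ i, Complex.normSq (w i α) with hdd
  have h1 : ∑ α ∈ A, d α = m := by
    calc ∑ α ∈ A, d α = ∑ i, ∑ α ∈ A, Complex.normSq (w i α) := Finset.sum_comm
      _ = ∑ _i : Fin m, (1 : ℝ) := Finset.sum_congr rfl fun i _ => hd i
      _ = m := by simp
  have h2 : ((m : ℝ)) ^ 2 ≤ (A.card : ℝ) * ∑ α ∈ A, (d α) ^ 2 := by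
    have := sq_sum_le_card_mul_sum_sq (s := A) (f := d)
    rwa [h1] at this
  have h3 : ∀ α ∈ A, d α ^ 2 ≤
      ∑ β ∈ A, Complex.normSq (∑ i, (starRingEnd ℂ) (w i α) * w i β) := by
    intro α hα
    have hSd : (∑ i, (starRingEnd ℂ) (w i α) * w i α) = ((d α : ℝ) : ℂ) := by
      rw [hdd]
      push_cast
      exact Finset.sum_congr rfl fun i _ => (Complex.normSq_eq_conj_mul_self).symm
    have : Complex.normSq (∑ i, (starRingEnd ℂ) (w i α) * w i α) = d α ^ 2 := by
      rw [hSd, Complex.normSq_ofReal, sq]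
    rw [← this]
    exact Finset.single_le_sum
      (f := fun β => Complex.normSq (∑ i, (starRingEnd ℂ) (w i α) * w i β))
      (fun β _ => Complex.normSq_nonneg _) hα
  have h4 := welch_swap A w
  have hc0 : 0 ≤ cmax := by
    obtain ⟨i, j, hij, he⟩ := hcmax.1
    rw [he]
    exact norm_nonneg _
  have hoff : ∀ i j : Fin m, i ≠ j →
      Complex.normSq ((⟪z i, z j⟫ : ℂ) ^ k) ≤ cmax ^ (2 * k) := by
    intro i j hij
    have hle : ‖⟪z i, z j⟫‖ ≤ cmax := hcmax.2 ⟨i, j, hij, rfl⟩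
    calc Complex.normSq ((⟪z i, z j⟫ : ℂ) ^ k)
        = (‖⟪z i, z j⟫‖) ^ (2 * k) := by
          rw [← Complex.sq_norm, norm_pow, ← pow_mul, mul_comm]
      _ ≤ cmax ^ (2 * k) := pow_le_pow_left₀ (norm_nonneg _) hle _
  have hdiag : ∀ i : Fin m, Complex.normSq ((⟪z i, z i⟫ : ℂ) ^ k) = 1 := by
    intro i
    rw [inner_self_eq_norm_sq_to_K, hz i]
    norm_num
  have hrow : ∀ i : Fin m, ∑ j, Complex.normSq ((⟪z i, z j⟫ : ℂ) ^ k)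
      ≤ 1 + ((m : ℝ) - 1) * cmax ^ (2 * k) := by
    intro i
    rw [← Finset.add_sum_erase _ _ (Finset.mem_univ i), hdiag i]
    refine add_le_add le_rfl ?_
    have hcard : ((univ : Finset (Fin m)).erase i).card = m - 1 := by
      rw [Finset.card_erase_of_mem (Finset.mem_univ i), Finset.card_univ, Fintype.card_fin]
    calc ∑ j ∈ (univ : Finset (Fin m)).erase i, Complex.normSq ((⟪z i, z j⟫ : ℂ) ^ k)
        ≤ ((univ : Finset (Fin m)).erase i).card • (cmax ^ (2 * k)) := by
          refine Finset.sum_le_card_nsmul _ _ _ fun j hj => ?_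
          exact hoff i j (Ne.symm (Finset.ne_of_mem_erase hj))
      _ = ((m : ℝ) - 1) * cmax ^ (2 * k) := by
          rw [hcard, nsmul_eq_mul, Nat.cast_sub (by omega)]
          norm_num
  have h5 : ∑ i, ∑ j, Complex.normSq (∑ α ∈ A, (starRingEnd ℂ) (w i α) * w j α)
      ≤ (m : ℝ) + (m : ℝ) * ((m : ℝ) - 1) * cmax ^ (2 * k) := by
    calc ∑ i, ∑ j, Complex.normSq (∑ α ∈ A, (starRingEnd ℂ) (w i α) * w j α)
        = ∑ i, ∑ j, Complex.normSq ((⟪z i, z j⟫ : ℂ) ^ k) := by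
          refine Finset.sum_congr rfl fun i _ => Finset.sum_congr rfl fun j _ => by rw [hG]
      _ ≤ ∑ _i : Fin m, (1 + ((m : ℝ) - 1) * cmax ^ (2 * k)) :=
          Finset.sum_le_sum fun i _ => hrow i
      _ = (m : ℝ) * (1 + ((m : ℝ) - 1) * cmax ^ (2 * k)) := by
          rw [Finset.sum_const, Finset.card_univ, Fintype.card_fin, nsmul_eq_mul]
      _ = (m : ℝ) + (m : ℝ) * ((m : ℝ) - 1) * cmax ^ (2 * k) := by ring
  have hkey : ((m : ℝ)) ^ 2 ≤ (A.card : ℝ) *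
      ((m : ℝ) + (m : ℝ) * ((m : ℝ) - 1) * cmax ^ (2 * k)) := by
    refine h2.trans ?_
    refine mul_le_mul_of_nonneg_left ?_ (Nat.cast_nonneg _)
    calc ∑ α ∈ A, (d α) ^ 2
        ≤ ∑ α ∈ A, ∑ β ∈ A, Complex.normSq (∑ i, (starRingEnd ℂ) (w i α) * w i β) :=
          Finset.sum_le_sum h3
      _ = ∑ i, ∑ j, Complex.normSq (∑ α ∈ A, (starRingEnd ℂ) (w i α) * w j α) := h4
      _ ≤ (m : ℝ) + (m : ℝ) * ((m : ℝ) - 1) * cmax ^ (2 * k) := h5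
  have hNcard : (A.card : ℝ) = ((n + k - 1).choose k : ℝ) := by
    exact_mod_cast welch_card n k
  have hNpos : (0 : ℝ) < (A.card : ℝ) := by
    rw [hNcard]
    have : 0 < (n + k - 1).choose k := Nat.choose_pos (by omega)
    exact_mod_cast this
  rw [ge_iff_le, ← hNcard]
  have hM1 : (0 : ℝ) < (m : ℝ) - 1 := by
    have : (2 : ℝ) ≤ (m : ℝ) := by exact_mod_cast hm
    linarith
  rw [one_div, inv_mul_le_iff₀ hM1, sub_le_iff_le_add, div_le_iff₀ hNpos]
  have hM : (2 : ℝ) ≤ (m : ℝ) := by exact_mod_cast hm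
  have hCnn : 0 ≤ cmax ^ (2 * k) := pow_nonneg hc0 _
  nlinarith [hkey, mul_pos (lt_of_lt_of_le (by norm_num : (0:ℝ) < 2) hM) hNpos]
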